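/- Let n ≥ 3 and let λ₁ ≥ ... ≥ λₙ be real numbers with ∑_{i=1}^n arctan(λᵢ) ≥ (n-2)π/2 and λₙ < 0. Then σₙ(λ) = λ₁···λₙ < 0 and σ_{n-1}(λ) ≥ 0, and hence (λ₁/2)(σ_{n-1}/σₙ) ≤ 0. -/

import Mathlib

/-- The k-th elementary symmetric polynomial of λ₁,...,λₙ. -/
def esymm (n k : ℕ) (lam : Fin n → ℝ) : ℝ :=
  ∑ s ∈ Finset.powersetCard k (Finset.univ : Finset (Fin n)), ∏ i ∈ s, lam i

open Real Finset

lemma arctan_add_le' {x y : ℝ} (hx : 0 ≤ x) (hy : 0 ≤ y) :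
    Real.arctan (x + y) ≤ Real.arctan x + Real.arctan y := by
  rcases lt_or_ge (x * y) 1 with h | h
  · rw [Real.arctan_add h]
    apply Real.arctan_strictMono.monotone
    have h1 : 0 < 1 - x * y := by linarith
    rw [le_div_iff₀ h1]
    nlinarith [mul_nonneg (add_nonneg hx hy) (mul_nonneg hx hy)]
  · have hx0 : 0 < x := by nlinarith
    have hy0 : 0 < y := by nlinarith
    have h1 : x⁻¹ ≤ y := by
      rw [inv_le_iff_one_le_mul₀' hx0]; nlinarith
    have h2 : Real.arctan x⁻¹ ≤ Real.arctan y := Real.arctan_strictMono.monotone h1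
    rw [Real.arctan_inv_of_pos hx0] at h2
    have := Real.arctan_lt_pi_div_two (x + y)
    linarith

lemma arctan_sum_le {α : Type*} (s : Finset α) (f : α → ℝ) (hf : ∀ i ∈ s, 0 ≤ f i) :
    Real.arctan (∑ i ∈ s, f i) ≤ ∑ i ∈ s, Real.arctan (f i) := by
  induction s using Finset.cons_induction with
  | empty => simp
  | cons a s ha ih =>
    simp only [Finset.sum_cons]
    have h1 : 0 ≤ f a := hf a (Finset.mem_cons_self a s)
    have h2 : ∀ i ∈ s, 0 ≤ f i := fun i hi => hf i (Finset.mem_cons.mpr (Or.inr hi))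
    calc Real.arctan (f a + ∑ i ∈ s, f i)
        ≤ Real.arctan (f a) + Real.arctan (∑ i ∈ s, f i) :=
          arctan_add_le' h1 (Finset.sum_nonneg h2)
      _ ≤ _ := add_le_add_right (ih h2) _

theorem esymm_signs (n : ℕ) (hn : 3 ≤ n) (lam : Fin n → ℝ)
    (hsort : ∀ i j : Fin n, i ≤ j → lam j ≤ lam i)
    (hsum : ∑ i, Real.arctan (lam i) ≥ ((n : ℝ) - 2) * Real.pi / 2)
    (hneg : lam ⟨n - 1, by omega⟩ < 0) :
    esymm n n lam < 0 ∧ 0 ≤ esymm n (n - 1) lam ∧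
      (lam ⟨0, by omega⟩ / 2) * (esymm n (n - 1) lam / esymm n n lam) ≤ 0 := by
  set last : Fin n := ⟨n - 1, by omega⟩ with hlast
  set s0 : Finset (Fin n) := Finset.univ.erase last with hs0
  have hlmem : last ∈ (Finset.univ : Finset (Fin n)) := Finset.mem_univ _
  have hcard : s0.card = n - 1 := by
    rw [hs0, Finset.card_erase_of_mem hlmem, Finset.card_univ, Fintype.card_fin]
  -- split the arctan sum
  have hsplit : ∑ i, Real.arctan (lam i)
      = Real.arctan (lam last) + ∑ i ∈ s0, Real.arctan (lam i) :=
    (Finset.add_sum_erase _ _ hlmem).symm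
  -- key bound
  have hkey : ∑ i ∈ s0, (Real.pi / 2 - Real.arctan (lam i))
      ≤ Real.pi / 2 + Real.arctan (lam last) := by
    have h1 : ∑ i ∈ s0, (Real.pi / 2 - Real.arctan (lam i))
        = (s0.card : ℝ) * (Real.pi / 2) - ∑ i ∈ s0, Real.arctan (lam i) := by
      rw [Finset.sum_sub_distrib, Finset.sum_const, nsmul_eq_mul]
    rw [h1, hcard]
    have hc : ((n - 1 : ℕ) : ℝ) = (n : ℝ) - 1 := by
      have : 1 ≤ n := by omega
      push_cast [this]; ring
    rw [hc]
    have h2 : ((n : ℝ) - 2) * Real.pi / 2 - Real.arctan (lam last)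
        ≤ ∑ i ∈ s0, Real.arctan (lam i) := by
      rw [hsplit] at hsum; linarith
    linarith
  have harctan_last_neg : Real.arctan (lam last) < 0 := by
    rw [← Real.arctan_zero]
    exact Real.arctan_strictMono hneg
  -- positivity of the other eigenvalues
  have hpos : ∀ i ∈ s0, 0 < lam i := by
    intro i hi
    have h1 : Real.pi / 2 - Real.arctan (lam i)
        ≤ ∑ j ∈ s0, (Real.pi / 2 - Real.arctan (lam j)) :=
      Finset.single_le_sum (f := fun j => Real.pi / 2 - Real.arctan (lam j))
        (fun j _ => by linarith [Real.arctan_lt_pi_div_two (lam j)]) hi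
    have h2 : 0 < Real.arctan (lam i) := by linarith
    by_contra h
    have := Real.arctan_strictMono.monotone (not_lt.mp h)
    rw [Real.arctan_zero] at this
    linarith
  set L := lam last with hL
  set P := ∏ i ∈ s0, lam i with hP
  have hPpos : 0 < P := Finset.prod_pos hpos
  -- esymm n n
  have hesn : esymm n n lam = L * P := by
    rw [esymm]
    have h2 := Finset.powersetCard_self (Finset.univ : Finset (Fin n))
    rw [Finset.card_univ, Fintype.card_fin] at h2
    rw [h2, Finset.sum_singleton]
    exact (Finset.mul_prod_erase _ _ hlmem).symm
  have hesn_neg : esymm n n lam < 0 := by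
    rw [hesn]; exact mul_neg_of_neg_of_pos hneg hPpos
  -- the key analytic inequality: ∑ 1/λᵢ ≤ 1/(-L)
  have hinv : ∑ i ∈ s0, (lam i)⁻¹ ≤ (-L)⁻¹ := by
    have hLpos : 0 < -L := by linarith
    have h1 : ∑ i ∈ s0, Real.arctan ((lam i)⁻¹) ≤ Real.arctan ((-L)⁻¹) := by
      have h2 : ∀ i ∈ s0, Real.arctan ((lam i)⁻¹) = Real.pi / 2 - Real.arctan (lam i) :=
        fun i hi => Real.arctan_inv_of_pos (hpos i hi)
      rw [Finset.sum_congr rfl h2, Real.arctan_inv_of_pos hLpos, Real.arctan_neg,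
        hL]
      linarith [hkey]
    have h3 : Real.arctan (∑ i ∈ s0, (lam i)⁻¹) ≤ Real.arctan ((-L)⁻¹) :=
      le_trans (arctan_sum_le s0 _ (fun i hi => (inv_pos.mpr (hpos i hi)).le)) h1
    exact (Real.arctan_strictMono.le_iff_le).mp h3
  -- esymm n (n-1)
  have hesn1 : esymm n (n - 1) lam = ∑ i : Fin n, ∏ j ∈ Finset.univ.erase i, lam j := by
    rw [esymm]
    refine (Finset.sum_bij (fun i _ => Finset.univ.erase i) ?_ ?_ ?_ ?_).symm
    · intro i _
      rw [Finset.mem_powersetCard]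
      exact ⟨Finset.erase_subset _ _, by
        rw [Finset.card_erase_of_mem (Finset.mem_univ _), Finset.card_univ, Fintype.card_fin]⟩
    · intro i _ j _ h
      by_contra hne
      have h' : Finset.univ.erase i = Finset.univ.erase j := h
      have : i ∈ Finset.univ.erase j := Finset.mem_erase.mpr ⟨hne, Finset.mem_univ _⟩
      rw [← h'] at this
      exact (Finset.notMem_erase i _) this
    · intro t ht
      rw [Finset.mem_powersetCard] at ht
      have hcc : tᶜ.card = 1 := by
        rw [Finset.card_compl, ht.2, Fintype.card_fin]; omega
      obtain ⟨i, hi⟩ := Finset.card_eq_one.mp hcc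
      refine ⟨i, Finset.mem_univ _, ?_⟩
      have : tᶜᶜ = ({i} : Finset (Fin n))ᶜ := by rw [hi]
      rw [compl_compl, Finset.compl_singleton] at this
      exact this.symm
    · intro i _; rfl
  have herase : ∀ i ∈ s0, ∏ j ∈ Finset.univ.erase i, lam j = L * (P * (lam i)⁻¹) := by
    intro i hi
    have hi' : i ≠ last := (Finset.mem_erase.mp hi).1
    have hlm : last ∈ Finset.univ.erase i :=
      Finset.mem_erase.mpr ⟨fun h => hi' h.symm, Finset.mem_univ _⟩
    rw [← Finset.mul_prod_erase _ _ hlm, Finset.erase_right_comm]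
    congr 1
    have hne : lam i ≠ 0 := (hpos i hi).ne'
    have hpe : (∏ x ∈ s0.erase i, lam x) * lam i = P := by
      rw [hP, hs0]
      exact Finset.prod_erase_mul _ _ hi
    rw [← hpe, mul_assoc, mul_inv_cancel₀ hne, mul_one]
  have hsum1 : ∑ i : Fin n, ∏ j ∈ Finset.univ.erase i, lam j
      = P + L * P * ∑ i ∈ s0, (lam i)⁻¹ := by
    rw [← Finset.add_sum_erase _ _ hlmem, ← hs0]
    congr 1
    rw [Finset.sum_congr rfl herase, ← Finset.mul_sum, Finset.mul_sum, Finset.mul_sum]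
    exact Finset.sum_congr rfl fun i _ => by ring
  have hesn1_nonneg : 0 ≤ esymm n (n - 1) lam := by
    rw [hesn1, hsum1]
    have hLneg : L < 0 := hneg
    have h1 : L * ∑ i ∈ s0, (lam i)⁻¹ ≥ L * (-L)⁻¹ :=
      mul_le_mul_of_nonpos_left hinv hLneg.le
    have h2 : L * (-L)⁻¹ = -1 := by
      rw [inv_neg, mul_neg, mul_inv_cancel₀ hLneg.ne]
    nlinarith
  refine ⟨hesn_neg, hesn1_nonneg, ?_⟩
  have h0mem : (⟨0, by omega⟩ : Fin n) ∈ s0 := by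
    refine Finset.mem_erase.mpr ⟨?_, Finset.mem_univ _⟩
    intro h
    have := congrArg Fin.val h
    simp [hlast] at this
    omega
  have h0pos : 0 < lam ⟨0, by omega⟩ := hpos _ h0mem
  have hdiv : esymm n (n - 1) lam / esymm n n lam ≤ 0 :=
    div_nonpos_of_nonneg_of_nonpos hesn1_nonneg hesn_neg.le
  exact mul_nonpos_of_nonneg_of_nonpos (by linarith) hdiv
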